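/- Let A₀, A₁, B₀, B₁ be self-adjoint operators on a Hilbert space with A₀² = A₁² = B₀² = B₁² = 1 and [Aₓ, B_y] = 0 for all x, y ∈ {0,1}. For β = 0 and α ≥ 1, the operator η·1 − B_{[α,0]}, where B_{[α,0]} = α(A₀B₀ + A₀B₁) + A₁B₀ − A₁B₁ and η = 2√(1 + α²), equals (1/(Δ + 2η))·[(η·1 − B_{[α,0]})² + α²·S₀² + (α² − 1)((η/(α²+1)·1 − A₁(B₀ − B₁))² + (−ηα/(α²+1)·A₀ + B₀ + B₁)²)], where S₀ = A₀(B₀ − B₁) + (1/α)A₁(B₀ + B₁) and Δ = 2(α² − 1)·√(4/(α²+1)). In particular η·1 − B_{[α,0]} is positive semidefinite. -/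

import Mathlib

open ContinuousLinearMap

theorem aux_sq_pos {H : Type*} [NormedAddCommGroup H] [InnerProductSpace ℂ H] [CompleteSpace H]
    (X : H →L[ℂ] H) (hX : IsSelfAdjoint X) : (X ^ 2).IsPositive := by
  have h1 := (isPositive_one (𝕜 := ℂ) (E := H)).adjoint_conj X
  have h2 : (adjoint X).comp ((1 : H →L[ℂ] H).comp X) = X ^ 2 := by
    have : adjoint X = X := by rw [← star_eq_adjoint, hX.star_eq]
    rw [this, pow_two]
    rfl
  rwa [h2] at h1

theorem aux_smul_pos {H : Type*} [NormedAddCommGroup H] [InnerProductSpace ℂ H] [CompleteSpace H]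
    (r : ℝ) (hr : 0 ≤ r) (T : H →L[ℂ] H) (hT : T.IsPositive) : ((r : ℂ) • T).IsPositive := by
  rw [isPositive_def']
  constructor
  · rw [IsSelfAdjoint, star_smul, hT.isSelfAdjoint.star_eq, Complex.star_def, Complex.conj_ofReal]
  · intro x
    have h := hT.2 x
    rw [reApplyInnerSelf_apply] at h ⊢
    have hx : ((r : ℂ) • T) x = (r : ℂ) • T x := rfl
    rw [hx, inner_smul_left, Complex.conj_ofReal]
    have : RCLike.re ((r : ℂ) * inner ℂ (T x) x) = r * RCLike.re (inner ℂ (T x) x : ℂ) := by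
      simp [RCLike.re_to_complex, Complex.re_ofReal_mul]
    rw [this]
    positivity

set_option maxHeartbeats 1000000 in
theorem main_id {H : Type*} [NormedAddCommGroup H] [InnerProductSpace ℂ H] [CompleteSpace H]
    (A₀ A₁ B₀ B₁ : H →L[ℂ] H)
    (hA₀2 : A₀ * A₀ = 1) (hA₁2 : A₁ * A₁ = 1) (hB₀2 : B₀ * B₀ = 1) (hB₁2 : B₁ * B₁ = 1)
    (hc00 : A₀ * B₀ = B₀ * A₀) (hc01 : A₀ * B₁ = B₁ * A₀)
    (hc10 : A₁ * B₀ = B₀ * A₁) (hc11 : A₁ * B₁ = B₁ * A₁)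
    (α h : ℝ) (hα : 1 ≤ α) (hh2 : h ^ 2 = 1 + α ^ 2) (hhpos : 0 < h) :
    ((8 * α ^ 2 / h : ℝ) : ℂ) • ((( 2*h : ℝ) : ℂ) • (1 : H →L[ℂ] H) -
        ((α : ℂ) • (A₀ * B₀ + A₀ * B₁) + A₁ * B₀ - A₁ * B₁)) =
      ((((2*h) : ℝ) : ℂ) • (1 : H →L[ℂ] H) -
        ((α : ℂ) • (A₀ * B₀ + A₀ * B₁) + A₁ * B₀ - A₁ * B₁)) ^ 2 +
      ((α ^ 2 : ℝ) : ℂ) • (A₀ * (B₀ - B₁) + (α⁻¹ : ℂ) • (A₁ * (B₀ + B₁))) ^ 2 +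
      ((α ^ 2 - 1 : ℝ) : ℂ) •
        (((2 / h : ℝ) : ℂ) • (1 : H →L[ℂ] H) - A₁ * (B₀ - B₁)) ^ 2 +
      ((α ^ 2 - 1 : ℝ) : ℂ) •
        ((-((2 * α / h : ℝ) : ℂ)) • A₀ + B₀ + B₁) ^ 2 := by
  have hα0 : (0:ℝ) < α := lt_of_lt_of_le one_pos hα
  have hcα : (α : ℂ) ≠ 0 := by exact_mod_cast hα0.ne'
  have hch : (h : ℂ) ≠ 0 := by exact_mod_cast hhpos.ne'
  have hc2 : (h : ℂ) ^ 2 = 1 + (α : ℂ) ^ 2 := by exact_mod_cast hh2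
  have m00 : ∀ x : H →L[ℂ] H, B₀ * (A₀ * x) = A₀ * (B₀ * x) := fun x => by
    rw [← mul_assoc, ← hc00, mul_assoc]
  have m01 : ∀ x : H →L[ℂ] H, B₁ * (A₀ * x) = A₀ * (B₁ * x) := fun x => by
    rw [← mul_assoc, ← hc01, mul_assoc]
  have m10 : ∀ x : H →L[ℂ] H, B₀ * (A₁ * x) = A₁ * (B₀ * x) := fun x => by
    rw [← mul_assoc, ← hc10, mul_assoc]
  have m11 : ∀ x : H →L[ℂ] H, B₁ * (A₁ * x) = A₁ * (B₁ * x) := fun x => by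
    rw [← mul_assoc, ← hc11, mul_assoc]
  have sA0 : ∀ x : H →L[ℂ] H, A₀ * (A₀ * x) = x := fun x => by
    rw [← mul_assoc, hA₀2, one_mul]
  have sA1 : ∀ x : H →L[ℂ] H, A₁ * (A₁ * x) = x := fun x => by
    rw [← mul_assoc, hA₁2, one_mul]
  have sB0 : ∀ x : H →L[ℂ] H, B₀ * (B₀ * x) = x := fun x => by
    rw [← mul_assoc, hB₀2, one_mul]
  have sB1 : ∀ x : H →L[ℂ] H, B₁ * (B₁ * x) = x := fun x => by
    rw [← mul_assoc, hB₁2, one_mul]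
  simp only [pow_two, mul_add, add_mul, mul_sub, sub_mul, smul_mul_assoc, mul_smul_comm,
    smul_add, smul_sub, smul_smul, mul_one, one_mul, mul_assoc, hc00.symm, hc01.symm,
    hc10.symm, hc11.symm, m00, m01, m10, m11, sA0, sA1, sB0, sB1, hA₀2, hA₁2, hB₀2, hB₁2]
  match_scalars
  have hne : (1 : ℂ) + (α:ℂ)^2 ≠ 0 := by rw [← hc2]; exact pow_ne_zero 2 hch
  have hc3 : (h : ℂ)^3 = (h:ℂ) * (1 + (α:ℂ)^2) := by rw [← hc2]; ring
  have hc4 : (h : ℂ)^4 = (1 + (α:ℂ)^2)^2 := by rw [← hc2]; ring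
  have hc5 : (h : ℂ)^5 = (h:ℂ) * (1 + (α:ℂ)^2)^2 := by rw [← hc2]; ring
  all_goals try field_simp
  all_goals try ring_nf
  · linear_combination (-4 * (h:ℂ)^2 + 4 * (α:ℂ)^2 - 4) * hc2
  · linear_combination (4 : ℂ) * hc2
  · linear_combination (4 : ℂ) * hc2
  · linear_combination (4 : ℂ) * hc2
  · linear_combination (-4 : ℂ) * hc2

set_option maxHeartbeats 1000000 in
theorem stmt_2 {H : Type*} [NormedAddCommGroup H] [InnerProductSpace ℂ H] [CompleteSpace H]
    (A₀ A₁ B₀ B₁ : H →L[ℂ] H)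
    (hA₀ : IsSelfAdjoint A₀) (hA₁ : IsSelfAdjoint A₁)
    (hB₀ : IsSelfAdjoint B₀) (hB₁ : IsSelfAdjoint B₁)
    (hA₀2 : A₀ * A₀ = 1) (hA₁2 : A₁ * A₁ = 1) (hB₀2 : B₀ * B₀ = 1) (hB₁2 : B₁ * B₁ = 1)
    (hc00 : A₀ * B₀ = B₀ * A₀) (hc01 : A₀ * B₁ = B₁ * A₀)
    (hc10 : A₁ * B₀ = B₀ * A₁) (hc11 : A₁ * B₁ = B₁ * A₁)
    (α : ℝ) (hα : 1 ≤ α)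
    (η Δ : ℝ) (hη : η = 2 * Real.sqrt (1 + α ^ 2))
    (hΔ : Δ = 2 * (α ^ 2 - 1) * Real.sqrt (4 / (α ^ 2 + 1)))
    (B S₀ : H →L[ℂ] H)
    (hB : B = (α : ℂ) • (A₀ * B₀ + A₀ * B₁) + A₁ * B₀ - A₁ * B₁)
    (hS₀ : S₀ = A₀ * (B₀ - B₁) + (α⁻¹ : ℂ) • (A₁ * (B₀ + B₁))) :
    (η : ℂ) • (1 : H →L[ℂ] H) - B =
      ((Δ + 2 * η : ℝ)⁻¹ : ℂ) •
        (((η : ℂ) • (1 : H →L[ℂ] H) - B) ^ 2 + ((α ^ 2 : ℝ) : ℂ) • S₀ ^ 2 +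
          ((α ^ 2 - 1 : ℝ) : ℂ) •
            (((η / (α ^ 2 + 1) : ℝ) : ℂ) • (1 : H →L[ℂ] H) - A₁ * (B₀ - B₁)) ^ 2 +
          ((α ^ 2 - 1 : ℝ) : ℂ) •
            ((-(η * α / (α ^ 2 + 1) : ℝ) : ℂ) • A₀ + B₀ + B₁) ^ 2) ∧
    ((η : ℂ) • (1 : H →L[ℂ] H) - B).IsPositive := by
  set h : ℝ := Real.sqrt (1 + α ^ 2) with hhdef
  have hα0 : (0:ℝ) < α := lt_of_lt_of_le one_pos hα
  have h1α : (0:ℝ) < 1 + α ^ 2 := by positivity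
  have hhpos : 0 < h := Real.sqrt_pos.2 h1α
  have hh2 : h ^ 2 = 1 + α ^ 2 := Real.sq_sqrt h1α.le
  have r1 : η = 2 * h := hη
  have r2 : η / (α ^ 2 + 1) = 2 / h := by
    rw [r1]
    rw [div_eq_div_iff (by linarith) hhpos.ne']
    linarith [hh2]
  have r3 : η * α / (α ^ 2 + 1) = 2 * α / h := by
    rw [r1]
    rw [div_eq_div_iff (by linarith) hhpos.ne']
    nlinarith [hh2]
  have hsq4 : Real.sqrt (4 / (α ^ 2 + 1)) = 2 / h := by
    have : (4 : ℝ) / (α ^ 2 + 1) = (2 / h) ^ 2 := by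
      rw [div_pow, hh2]
      norm_num
      rw [add_comm]
    rw [this, Real.sqrt_sq (by positivity)]
  have hkey : Δ + 2 * η = 8 * α ^ 2 / h := by
    rw [hΔ, hsq4, r1]
    field_simp
    linear_combination (4:ℝ) * hh2
  have hkeypos : 0 < Δ + 2 * η := by rw [hkey]; positivity
  have hcne : ((8 * α ^ 2 / h : ℝ) : ℂ) ≠ 0 := by
    exact_mod_cast (by positivity : (0:ℝ) < 8 * α ^ 2 / h).ne'
  -- selfadjointness facts
  have e0 : (B₀ - B₁) * A₀ = A₀ * (B₀ - B₁) := by rw [sub_mul, mul_sub, hc00, hc01]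
  have e1 : (B₀ + B₁) * A₁ = A₁ * (B₀ + B₁) := by rw [add_mul, mul_add, hc10, hc11]
  have e2 : (B₀ - B₁) * A₁ = A₁ * (B₀ - B₁) := by rw [sub_mul, mul_sub, hc10, hc11]
  have hBsa : IsSelfAdjoint B := by
    rw [hB, IsSelfAdjoint]
    simp only [star_sub, star_add, star_smul, star_mul, hA₀.star_eq, hA₁.star_eq,
      hB₀.star_eq, hB₁.star_eq, Complex.star_def, Complex.conj_ofReal]
    rw [← hc00, ← hc01, ← hc10, ← hc11]
  have hGsa : IsSelfAdjoint ((η : ℂ) • (1 : H →L[ℂ] H) - B) := by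
    rw [IsSelfAdjoint, star_sub, star_smul, star_one, hBsa.star_eq,
      Complex.star_def, Complex.conj_ofReal]
  have hSsa : IsSelfAdjoint S₀ := by
    rw [hS₀, IsSelfAdjoint]
    simp only [star_add, star_smul, star_mul, star_sub, hA₀.star_eq, hA₁.star_eq,
      hB₀.star_eq, hB₁.star_eq, Complex.star_def, map_inv₀, Complex.conj_ofReal]
    rw [e0, e1]
  have hTsa : IsSelfAdjoint
      (((η / (α ^ 2 + 1) : ℝ) : ℂ) • (1 : H →L[ℂ] H) - A₁ * (B₀ - B₁)) := by
    rw [IsSelfAdjoint]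
    simp only [star_sub, star_smul, star_one, star_mul, hA₁.star_eq, hB₀.star_eq,
      hB₁.star_eq, Complex.star_def, Complex.conj_ofReal]
    rw [e2]
  have hUsa : IsSelfAdjoint
      ((-(η * α / (α ^ 2 + 1) : ℝ) : ℂ) • A₀ + B₀ + B₁) := by
    rw [IsSelfAdjoint]
    simp only [star_add, star_smul, star_neg, hA₀.star_eq, hB₀.star_eq, hB₁.star_eq,
      Complex.star_def, Complex.conj_ofReal]
  -- part 1
  have key := main_id A₀ A₁ B₀ B₁ hA₀2 hA₁2 hB₀2 hB₁2 hc00 hc01 hc10 hc11 α h hα hh2 hhpos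
  have part1 : (η : ℂ) • (1 : H →L[ℂ] H) - B =
      ((Δ + 2 * η : ℝ)⁻¹ : ℂ) •
        (((η : ℂ) • (1 : H →L[ℂ] H) - B) ^ 2 + ((α ^ 2 : ℝ) : ℂ) • S₀ ^ 2 +
          ((α ^ 2 - 1 : ℝ) : ℂ) •
            (((η / (α ^ 2 + 1) : ℝ) : ℂ) • (1 : H →L[ℂ] H) - A₁ * (B₀ - B₁)) ^ 2 +
          ((α ^ 2 - 1 : ℝ) : ℂ) •
            ((-(η * α / (α ^ 2 + 1) : ℝ) : ℂ) • A₀ + B₀ + B₁) ^ 2) := by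
    rw [hB, hS₀, r2, r3, hkey, r1]
    rw [← key, smul_smul, ← Complex.ofReal_inv, ← Complex.ofReal_mul,
      inv_mul_cancel₀ (by positivity : (8 * α ^ 2 / h : ℝ) ≠ 0), Complex.ofReal_one, one_smul]
  refine ⟨part1, ?_⟩
  rw [part1]
  have hP : (((η : ℂ) • (1 : H →L[ℂ] H) - B) ^ 2 + ((α ^ 2 : ℝ) : ℂ) • S₀ ^ 2 +
          ((α ^ 2 - 1 : ℝ) : ℂ) •
            (((η / (α ^ 2 + 1) : ℝ) : ℂ) • (1 : H →L[ℂ] H) - A₁ * (B₀ - B₁)) ^ 2 +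
          ((α ^ 2 - 1 : ℝ) : ℂ) •
            ((-(η * α / (α ^ 2 + 1) : ℝ) : ℂ) • A₀ + B₀ + B₁) ^ 2).IsPositive := by
    refine (((aux_sq_pos _ hGsa).add ?_).add ?_).add ?_
    · exact aux_smul_pos _ (by positivity) _ (aux_sq_pos _ hSsa)
    · exact aux_smul_pos _ (by nlinarith) _ (aux_sq_pos _ hTsa)
    · exact aux_smul_pos _ (by nlinarith) _ (aux_sq_pos _ hUsa)
  rw [← Complex.ofReal_inv]
  exact aux_smul_pos _ (by positivity) _ hP
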